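/- arXiv:1902.02428 — 4 statements merged into one kernel-verified Lean document; each statement's English description precedes it below -/
import Mathlib

section
/- Let g : {-1,1}^n → [0,1] and let d be a positive integer. Then the level-d Fourier weight in L2-norm satisfies ∑_{|S|=d} ĝ(S)^2 ≤ 4 · E[g]^2 · (2e · ln(e / E[g]^{1/d}))^d. -/
open Finset

/-- The sign of a Boolean bit, as a real number in `{-1, 1}`. -/
noncomputable def sgn (b : Bool) : ℝ := if b then 1 else -1

/-- Fourier coefficient of `f : {-1,1}^n → ℝ` at `S`, over the uniform distribution. -/
noncomputable def fhat {n : ℕ} (f : (Fin n → Bool) → ℝ) (S : Finset (Fin n)) : ℝ :=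
  (∑ x : Fin n → Bool, f x * ∏ i ∈ S, sgn (x i)) / 2 ^ n


lemma sgn_sq (b : Bool) : sgn b ^ 2 = 1 := by cases b <;> simp [sgn]

/-- binomial bound: C(2m,2k) ≤ (2m-1)^k C(m,k) -/
lemma choose_bound (m : ℕ) : ∀ k, k ≤ m → (2*m).choose (2*k) ≤ (2*m-1)^k * m.choose k := by
  intro k
  induction k with
  | zero => simp
  | succ k ih =>
    intro hk
    have hkm : k < m := hk
    have ihk := ih (le_of_lt hkm)
    have h1 : (2*m).choose (2*k+1) * (2*k+1) = (2*m).choose (2*k) * (2*m - 2*k) :=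
      Nat.choose_succ_right_eq _ _
    have h2 : (2*m).choose (2*k+2) * (2*k+2) = (2*m).choose (2*k+1) * (2*m - (2*k+1)) :=
      Nat.choose_succ_right_eq _ _
    have h3 : m.choose (k+1) * (k+1) = m.choose k * (m - k) :=
      Nat.choose_succ_right_eq _ _
    have key : (2*m).choose (2*k+2) * ((2*k+2)*(2*k+1))
        = (2*m).choose (2*k) * ((2*m-2*k) * (2*m - (2*k+1))) := by
      calc (2*m).choose (2*k+2) * ((2*k+2)*(2*k+1))
          = ((2*m).choose (2*k+2) * (2*k+2)) * (2*k+1) := by ring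
        _ = ((2*m).choose (2*k+1) * (2*m - (2*k+1))) * (2*k+1) := by rw [h2]
        _ = ((2*m).choose (2*k+1) * (2*k+1)) * (2*m - (2*k+1)) := by ring
        _ = ((2*m).choose (2*k) * (2*m-2*k)) * (2*m - (2*k+1)) := by rw [h1]
        _ = _ := by ring
    have hpos : 0 < (2*k+2)*(2*k+1) := by positivity
    apply Nat.le_of_mul_le_mul_right _ hpos
    have e1 : 2*m - 2*k = 2*(m-k) := by omega
    have e3 : (2*m-2*k) * (2*m-(2*k+1)) ≤ (2*(m-k)) * ((2*m-1)*(2*k+1)) := by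
      rw [e1]
      apply Nat.mul_le_mul_left
      have : 2*m-(2*k+1) ≤ 2*m-1 := by omega
      exact le_trans this (Nat.le_mul_of_pos_right _ (by omega))
    calc (2*m).choose (2*(k+1)) * ((2*k+2)*(2*k+1))
        = (2*m).choose (2*k) * ((2*m-2*k) * (2*m-(2*k+1))) := by
          rw [show 2*(k+1) = 2*k+2 by ring]; exact key
      _ ≤ ((2*m-1)^k * m.choose k) * ((2*m-2*k) * (2*m-(2*k+1))) :=
          Nat.mul_le_mul_right _ ihk
      _ ≤ ((2*m-1)^k * m.choose k) * ((2*(m-k)) * ((2*m-1)*(2*k+1))) :=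
          Nat.mul_le_mul_left _ e3
      _ = ((2*m-1)^(k+1) * (m.choose k * (m-k))) * (2*(2*k+1)) := by ring
      _ = ((2*m-1)^(k+1) * (m.choose (k+1) * (k+1))) * (2*(2*k+1)) := by rw [h3]
      _ = ((2*m-1)^(k+1) * m.choose (k+1)) * ((2*k+2)*(2*k+1)) := by ring

lemma two_point (m : ℕ) (a b : ℝ) :
    (a+b)^(2*m) + (a-b)^(2*m) ≤ 2 * (((2*m-1 : ℕ):ℝ)*a^2 + b^2)^m := by
  have expand : (a+b)^(2*m) + (a-b)^(2*m)
      = ∑ k ∈ range (m+1), 2*((2*m).choose (2*k) : ℝ)*a^(2*k)*b^(2*(m-k)) := by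
    rw [show a - b = a + (-b) by ring, add_pow, add_pow, ← Finset.sum_add_distrib]
    rw [show (∑ k ∈ range (m+1), 2*((2*m).choose (2*k) : ℝ)*a^(2*k)*b^(2*(m-k)))
        = ∑ j ∈ (range (2*m+1)).filter (fun j => Even j),
            2*(((2*m).choose j : ℝ))*a^j*b^(2*m-j) from ?_]
    · rw [← Finset.sum_filter_add_sum_filter_not (range (2*m+1)) (fun j => Even j)]
      have h2 : ∑ j ∈ (range (2*m+1)).filter (fun j => ¬ Even j),
          (a ^ j * b ^ (2*m - j) * ((2*m).choose j : ℝ)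
            + a ^ j * (-b) ^ (2*m - j) * ((2*m).choose j : ℝ)) = 0 := by
        apply Finset.sum_eq_zero
        intro j hj
        simp only [mem_filter, mem_range] at hj
        have hodd : Odd (2*m - j) := by
          rcases Nat.even_or_odd j with h | h
          · exact absurd h hj.2
          · have : j ≤ 2*m := by omega
            rcases h with ⟨c, hc⟩
            exact ⟨m - c - 1, by omega⟩
        rw [hodd.neg_pow]
        ring
      rw [h2, add_zero]
      apply Finset.sum_congr rfl
      intro j hj
      simp only [mem_filter, mem_range] at hj
      have heven : Even (2*m - j) := by
        rcases hj.2 with ⟨c, hc⟩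
        exact ⟨m - c, by omega⟩
      rw [heven.neg_pow]
      ring
    · refine Finset.sum_bij' (fun k _ => 2*k) (fun j _ => j/2) ?_ ?_ ?_ ?_ ?_
      · intro k hk
        simp only [mem_range] at hk
        simp only [mem_filter, mem_range]
        exact ⟨by omega, ⟨k, by omega⟩⟩
      · intro j hj
        simp only [mem_filter, mem_range] at hj
        simp only [mem_range]
        rcases hj.2 with ⟨c, hc⟩
        omega
      · intro k hk; omega
      · intro j hj
        simp only [mem_filter, mem_range] at hj
        rcases hj.2 with ⟨c, hc⟩
        omega
      · intro k hk
        simp only [mem_range] at hk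
        have : 2*m - 2*k = 2*(m-k) := by omega
        rw [this]
  rw [expand, add_pow, Finset.mul_sum]
  apply Finset.sum_le_sum
  intro k hk
  simp only [mem_range] at hk
  have hcb : ((2*m).choose (2*k) : ℝ) ≤ ((2*m-1)^k * m.choose k : ℕ) := by
    exact_mod_cast Nat.cast_le.mpr (choose_bound m k (by omega))
  calc 2*((2*m).choose (2*k) : ℝ)*a^(2*k)*b^(2*(m-k))
      = 2*(((2*m).choose (2*k):ℝ) * ((a^2)^k*(b^2)^(m-k))) := by
        rw [← pow_mul, ← pow_mul]; ring
    _ ≤ 2*((((2*m-1)^k * m.choose k : ℕ):ℝ) * ((a^2)^k*(b^2)^(m-k))) := by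
        apply mul_le_mul_of_nonneg_left _ (by norm_num)
        apply mul_le_mul_of_nonneg_right hcb (by positivity)
    _ = 2 * ((((2*m-1:ℕ):ℝ)*a^2)^k * (b^2)^(m-k) * (m.choose k : ℝ)) := by
        push_cast
        rw [mul_pow]
        ring

lemma holder_pow {ι : Type*} (s : Finset ι) (X Y : ι → ℝ) (hX : ∀ i, 0 ≤ X i)
    (hY : ∀ i, 0 ≤ Y i) (m k : ℕ) (hm : 1 ≤ m) (hk : k ≤ m) :
    ∑ i ∈ s, X i ^ k * Y i ^ (m-k)
      ≤ (∑ i ∈ s, X i ^ m) ^ ((k:ℝ)/m) * (∑ i ∈ s, Y i ^ m) ^ (((m-k:ℕ):ℝ)/m) := by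
  have hm0 : (m:ℝ) ≠ 0 := by positivity
  rcases Nat.eq_zero_or_pos k with rfl | hk0
  · simp only [pow_zero, one_mul, Nat.cast_zero, zero_div, Real.rpow_zero, Nat.sub_zero]
    rw [div_self hm0, Real.rpow_one]
  rcases eq_or_lt_of_le hk with rfl | hkm
  · simp only [Nat.sub_self, pow_zero, mul_one, Nat.cast_zero, zero_div, Real.rpow_zero]
    rw [div_self hm0, Real.rpow_one]
  · have hpq : Real.HolderConjugate ((m:ℝ)/k) ((m:ℝ)/(m-k:ℕ)) := by
      rw [Real.holderConjugate_iff]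
      constructor
      · rw [lt_div_iff₀ (by exact_mod_cast hk0), one_mul]
        exact_mod_cast hkm
      · have h1 : ((m:ℝ)/k)⁻¹ = (k:ℝ)/m := by rw [inv_div]
        have h2 : ((m:ℝ)/(m-k:ℕ))⁻¹ = ((m-k:ℕ):ℝ)/m := by rw [inv_div]
        rw [h1, h2, ← add_div, div_eq_one_iff_eq hm0]
        push_cast [Nat.cast_sub hk]
        ring
    have := Real.inner_le_Lp_mul_Lq s (fun i => X i ^ k) (fun i => Y i ^ (m-k)) hpq
    refine le_trans this ?_
    have e1 : ∀ i, |X i ^ k| ^ ((m:ℝ)/k) = X i ^ m := by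
      intro i
      rw [abs_of_nonneg (pow_nonneg (hX i) _), ← Real.rpow_natCast (X i) k,
        ← Real.rpow_mul (hX i), ← Real.rpow_natCast (X i) m]
      congr 1
      field_simp
    have e2 : ∀ i, |Y i ^ (m-k)| ^ ((m:ℝ)/(m-k:ℕ)) = Y i ^ m := by
      intro i
      have hmk0 : ((m-k:ℕ):ℝ) ≠ 0 := by
        have : 0 < m - k := by omega
        positivity
      rw [abs_of_nonneg (pow_nonneg (hY i) _), ← Real.rpow_natCast (Y i) (m-k),
        ← Real.rpow_mul (hY i), ← Real.rpow_natCast (Y i) m]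
      congr 1
      have h3 : (m:ℝ) - k ≠ 0 := sub_ne_zero.mpr (by exact_mod_cast hkm.ne')
      push_cast [Nat.cast_sub hk]
      field_simp
    simp only [e1, e2, one_div]
    rw [inv_div, inv_div]

lemma pow_rpow_div (z : ℝ) (hz : 0 ≤ z) (m k : ℕ) (hm : 1 ≤ m) :
    ((z^m) : ℝ) ^ ((k:ℝ)/m) = z^k := by
  have hm0 : (m:ℝ) ≠ 0 := by positivity
  rw [← Real.rpow_natCast z m, ← Real.rpow_mul hz, ← Real.rpow_natCast z k]
  congr 1
  field_simp

lemma sum_update {n : ℕ} (f : (Fin n → Bool) → ℝ) (i : Fin n) :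
    2 * ∑ x : Fin n → Bool, f x
      = (∑ x : Fin n → Bool, f (Function.update x i true))
        + ∑ x : Fin n → Bool, f (Function.update x i false) := by
  have hinv : Function.Involutive (fun x : Fin n → Bool => Function.update x i (!x i)) := by
    intro x
    funext j
    rcases eq_or_ne j i with rfl | hj
    · simp
    · simp [Function.update_of_ne hj]
  have hτ : ∑ x : Fin n → Bool, f x
      = ∑ x : Fin n → Bool, f (Function.update x i (!x i)) :=
    (Fintype.sum_equiv hinv.toPerm _ _ (fun x => rfl)).symm
  have key : ∀ x : Fin n → Bool, f x + f (Function.update x i (!x i))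
      = f (Function.update x i true) + f (Function.update x i false) := by
    intro x
    rcases Bool.eq_false_or_eq_true (x i) with hx | hx
    · rw [show Function.update x i (!x i) = Function.update x i false by simp [hx],
        show Function.update x i true = x by rw [← hx]; exact Function.update_eq_self i x]
    · rw [show Function.update x i (!x i) = Function.update x i true by simp [hx],
        show Function.update x i false = x by rw [← hx]; exact Function.update_eq_self i x]
      ring
  calc 2 * ∑ x : Fin n → Bool, f x
      = ∑ x : Fin n → Bool, f x + ∑ x : Fin n → Bool, f (Function.update x i (!x i)) := by
        rw [← hτ]; ring
    _ = ∑ x : Fin n → Bool, (f x + f (Function.update x i (!x i))) := by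
        rw [Finset.sum_add_distrib]
    _ = ∑ x : Fin n → Bool, (f (Function.update x i true) + f (Function.update x i false)) := by
        exact Finset.sum_congr rfl (fun x _ => key x)
    _ = _ := by rw [Finset.sum_add_distrib]

lemma hyp (n m : ℕ) (hm : 1 ≤ m) (T : Finset (Fin n)) :
    ∀ A : Finset (Fin n) → ℝ,
    ∑ x : Fin n → Bool, (∑ S ∈ T.powerset, A S * ∏ i ∈ S, sgn (x i)) ^ (2*m)
      ≤ 2^n * (∑ S ∈ T.powerset, ((2*m-1:ℕ):ℝ)^S.card * A S ^ 2) ^ m := by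
  classical
  induction T using Finset.induction_on with
  | empty =>
    intro A
    simp only [Finset.powerset_empty, Finset.sum_singleton, Finset.prod_empty, mul_one,
      Finset.card_empty, pow_zero, one_mul]
    rw [← pow_mul, mul_comm 2 m, Finset.sum_const, Finset.card_univ, Fintype.card_fun,
      Fintype.card_fin, Fintype.card_bool, nsmul_eq_mul, mul_comm m 2]
    push_cast
    exact le_refl _
  | @insert i T hi ih =>
    intro A
    set β : ℝ := ((2*m-1:ℕ):ℝ) with hβdef
    have hβ : 0 ≤ β := Nat.cast_nonneg _
    set FB : (Fin n → Bool) → ℝ := fun x => ∑ S ∈ T.powerset, A S * ∏ j ∈ S, sgn (x j) with hFB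
    set FC : (Fin n → Bool) → ℝ :=
      fun x => ∑ S ∈ T.powerset, A (insert i S) * ∏ j ∈ S, sgn (x j) with hFC
    set b : ℝ := ∑ S ∈ T.powerset, β^S.card * A S ^ 2 with hbdef
    set c : ℝ := ∑ S ∈ T.powerset, β^S.card * A (insert i S) ^ 2 with hcdef
    have hb : 0 ≤ b := Finset.sum_nonneg fun S _ => by positivity
    have hc : 0 ≤ c := Finset.sum_nonneg fun S _ => by positivity
    -- pointwise decomposition
    have hpt : ∀ (x : Fin n → Bool) (v : Bool),
        (∑ S ∈ (insert i T).powerset, A S * ∏ j ∈ S, sgn (Function.update x i v j))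
          = FB x + sgn v * FC x := by
      intro x v
      rw [Finset.sum_powerset_insert hi]
      congr 1
      · apply Finset.sum_congr rfl
        intro S hS
        have hiS : i ∉ S := fun h => hi (Finset.mem_powerset.mp hS h)
        congr 1
        exact Finset.prod_congr rfl fun j hj => by
          rw [Function.update_of_ne (fun h : j = i => hiS (by rw [← h]; exact hj))]
      · rw [Finset.mul_sum]
        apply Finset.sum_congr rfl
        intro S hS
        have hiS : i ∉ S := fun h => hi (Finset.mem_powerset.mp hS h)
        rw [Finset.prod_insert hiS, Function.update_self]
        rw [show ∏ j ∈ S, sgn (Function.update x i v j) = ∏ j ∈ S, sgn (x j) from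
          Finset.prod_congr rfl fun j hj =>
            by rw [Function.update_of_ne (fun h : j = i => hiS (by rw [← h]; exact hj))]]
        ring
    -- IH applied to the two coefficient functions
    have ihB : ∑ x : Fin n → Bool, FB x ^ (2*m) ≤ 2^n * b^m := ih A
    have ihC : ∑ x : Fin n → Bool, FC x ^ (2*m) ≤ 2^n * c^m := ih (fun S => A (insert i S))
    have h2n : (0:ℝ) ≤ 2^n := by positivity
    -- main chain, after multiplying by 2
    have main : 2 * ∑ x : Fin n → Bool,
        (∑ S ∈ (insert i T).powerset, A S * ∏ j ∈ S, sgn (x j)) ^ (2*m)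
        ≤ 2 * (2^n * (β*c + b)^m) := by
      rw [sum_update (fun x => (∑ S ∈ (insert i T).powerset, A S * ∏ j ∈ S, sgn (x j)) ^ (2*m)) i]
      have e1 : ∀ x : Fin n → Bool,
          (∑ S ∈ (insert i T).powerset, A S * ∏ j ∈ S, sgn (Function.update x i true j)) ^ (2*m)
          + (∑ S ∈ (insert i T).powerset, A S * ∏ j ∈ S, sgn (Function.update x i false j)) ^ (2*m)
          = (FC x + FB x)^(2*m) + (FC x - FB x)^(2*m) := by
        intro x
        rw [hpt x true, hpt x false]
        have : sgn true = 1 := rfl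
        have h2 : sgn false = -1 := rfl
        rw [this, h2]
        rw [show FB x + 1 * FC x = FC x + FB x by ring,
          show FB x + (-1) * FC x = -(FC x - FB x) by ring]
        rw [Even.neg_pow ⟨m, by ring⟩]
      rw [← Finset.sum_add_distrib]
      calc ∑ x : Fin n → Bool,
            ((∑ S ∈ (insert i T).powerset, A S * ∏ j ∈ S, sgn (Function.update x i true j)) ^ (2*m)
            + (∑ S ∈ (insert i T).powerset, A S * ∏ j ∈ S, sgn (Function.update x i false j)) ^ (2*m))
          = ∑ x : Fin n → Bool, ((FC x + FB x)^(2*m) + (FC x - FB x)^(2*m)) :=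
            Finset.sum_congr rfl fun x _ => e1 x
        _ ≤ ∑ x : Fin n → Bool, 2 * (β * FC x ^2 + FB x ^2)^m :=
            Finset.sum_le_sum fun x _ => two_point m (FC x) (FB x)
        _ = 2 * ∑ x : Fin n → Bool, ∑ k ∈ range (m+1),
              (β * FC x ^2)^k * (FB x ^2)^(m-k) * (m.choose k : ℝ) := by
            rw [← Finset.mul_sum]
            congr 1
            exact Finset.sum_congr rfl fun x _ => by rw [add_pow]
        _ = 2 * ∑ k ∈ range (m+1), (m.choose k : ℝ) *
              ∑ x : Fin n → Bool, (β * FC x ^2)^k * (FB x ^2)^(m-k) := by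
            congr 1
            rw [Finset.sum_comm]
            refine Finset.sum_congr rfl fun k _ => ?_
            rw [Finset.mul_sum]
            exact Finset.sum_congr rfl fun x _ => by ring
        _ ≤ 2 * ∑ k ∈ range (m+1), (m.choose k : ℝ) *
              ((2^n * (β*c)^m) ^ ((k:ℝ)/m) * (2^n * b^m) ^ (((m-k:ℕ):ℝ)/m)) := by
            apply mul_le_mul_of_nonneg_left _ (by norm_num)
            apply Finset.sum_le_sum
            intro k hk
            simp only [mem_range] at hk
            apply mul_le_mul_of_nonneg_left _ (Nat.cast_nonneg _)
            have hold := holder_pow Finset.univ (fun x => β * FC x ^2) (fun x => FB x ^2)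
              (fun x => by positivity) (fun x => by positivity) m k hm (by omega)
            refine le_trans hold ?_
            have hXm : ∑ x : Fin n → Bool, (β * FC x ^2)^m ≤ 2^n * (β*c)^m := by
              calc ∑ x : Fin n → Bool, (β * FC x ^2)^m
                  = β^m * ∑ x : Fin n → Bool, FC x ^(2*m) := by
                    rw [Finset.mul_sum]
                    exact Finset.sum_congr rfl fun x _ => by
                      rw [mul_pow, ← pow_mul]
                _ ≤ β^m * (2^n * c^m) := mul_le_mul_of_nonneg_left ihC (by positivity)
                _ = 2^n * (β*c)^m := by rw [mul_pow]; ring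
            have hYm : ∑ x : Fin n → Bool, (FB x ^2)^m ≤ 2^n * b^m := by
              calc ∑ x : Fin n → Bool, (FB x ^2)^m
                  = ∑ x : Fin n → Bool, FB x ^(2*m) :=
                    Finset.sum_congr rfl fun x _ => by rw [← pow_mul]
                _ ≤ 2^n * b^m := ihB
            have hXnn : (0:ℝ) ≤ ∑ x : Fin n → Bool, (β * FC x ^2)^m :=
              Finset.sum_nonneg fun x _ => by positivity
            have hYnn : (0:ℝ) ≤ ∑ x : Fin n → Bool, (FB x ^2)^m :=
              Finset.sum_nonneg fun x _ => by positivity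
            exact mul_le_mul (Real.rpow_le_rpow hXnn hXm (by positivity))
              (Real.rpow_le_rpow hYnn hYm (by positivity))
              (Real.rpow_nonneg hYnn _) (Real.rpow_nonneg (by positivity) _)
        _ = 2 * ∑ k ∈ range (m+1), (m.choose k : ℝ) * (2^n * ((β*c)^k * b^(m-k))) := by
            congr 1
            apply Finset.sum_congr rfl
            intro k hk
            simp only [mem_range] at hk
            congr 1
            rw [Real.mul_rpow h2n (by positivity), Real.mul_rpow h2n (by positivity)]
            rw [pow_rpow_div (β*c) (by positivity) m k hm,
              pow_rpow_div b hb m (m-k) hm]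
            have h2c : ((2:ℝ)^n)^((k:ℝ)/m) * ((2:ℝ)^n)^(((m-k:ℕ):ℝ)/m) = 2^n := by
              rw [← Real.rpow_add (by positivity), ← add_div,
                show ((k:ℝ) + ((m-k:ℕ):ℝ))/m = 1 by
                  rw [Nat.cast_sub (by omega : k ≤ m)]
                  field_simp
                  ring,
                Real.rpow_one]
            calc ((2:ℝ)^n)^((k:ℝ)/m) * (β*c)^k * (((2:ℝ)^n)^(((m-k:ℕ):ℝ)/m) * b^(m-k))
                = (((2:ℝ)^n)^((k:ℝ)/m) * ((2:ℝ)^n)^(((m-k:ℕ):ℝ)/m)) * ((β*c)^k * b^(m-k)) := by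
                  ring
              _ = 2^n * ((β*c)^k * b^(m-k)) := by rw [h2c]
        _ = 2 * (2^n * (β*c + b)^m) := by
            rw [add_pow, Finset.mul_sum, Finset.mul_sum, Finset.mul_sum, Finset.mul_sum]
            exact Finset.sum_congr rfl fun k _ => by ring
    have hsplit : ∑ S ∈ (insert i T).powerset, β^S.card * A S ^2 = β*c + b := by
      rw [Finset.sum_powerset_insert hi, hcdef, Finset.mul_sum, add_comm]
      congr 1
      apply Finset.sum_congr rfl
      intro S hS
      have hiS : i ∉ S := fun h => hi (Finset.mem_powerset.mp hS h)
      rw [Finset.card_insert_of_notMem hiS, pow_succ]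
      ring
    rw [hsplit]
    linarith [main]


-- the elementary analytic inequality
lemma analytic_key (u : ℝ) (hu : 0 ≤ u) :
    (3 + 2*u) * Real.exp (u/(1+u)) ≤ 2 * Real.exp 1 * (1+u) := by
  have h1u : (0:ℝ) < 1 + u := by linarith
  have e1 : Real.exp (u/(1+u)) = Real.exp 1 / Real.exp (1/(1+u)) := by
    rw [← Real.exp_sub]
    congr 1
    field_simp
    ring
  have e2 : 1/(1+u) + 1 ≤ Real.exp (1/(1+u)) := Real.add_one_le_exp _
  have Epos : 0 < Real.exp (1/(1+u)) := Real.exp_pos _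
  have epos : 0 < Real.exp 1 := Real.exp_pos _
  rw [e1, mul_div_assoc', div_le_iff₀ Epos]
  have h3 : (2+u) ≤ (1+u) * Real.exp (1/(1+u)) := by
    calc (2+u) = (1+u) * (1/(1+u) + 1) := by field_simp; ring
      _ ≤ (1+u) * Real.exp (1/(1+u)) := by
        apply mul_le_mul_of_nonneg_left e2 (le_of_lt h1u)
  nlinarith [mul_le_mul_of_nonneg_left h3 (le_of_lt (by positivity : (0:ℝ) < 2 * Real.exp 1))]


set_option maxHeartbeats 1000000 in
/-- Level-`d` inequality: for `g : {-1,1}^n → [0,1]` and `d ≥ 1`,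
`∑_{|S|=d} ĝ(S)^2 ≤ 4 E[g]^2 (2e ln(e / E[g]^{1/d}))^d`.  Note `E[g] = ĝ(∅)`. -/
theorem stmt1 (n d : ℕ) (hd : 0 < d) (g : (Fin n → Bool) → ℝ)
    (hg : ∀ x, g x ∈ Set.Icc (0 : ℝ) 1) :
    ∑ S ∈ Finset.univ.filter (fun S : Finset (Fin n) => S.card = d), (fhat g S) ^ 2
      ≤ 4 * (fhat g ∅) ^ 2 *
        (2 * Real.exp 1 *
          Real.log (Real.exp 1 / (fhat g ∅) ^ ((1 : ℝ) / d))) ^ d := by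
  classical
  have hg0 : ∀ x, 0 ≤ g x := fun x => (hg x).1
  have hg1 : ∀ x, g x ≤ 1 := fun x => (hg x).2
  set μ : ℝ := fhat g ∅ with hμdef
  have h2n0 : (0:ℝ) < 2^n := by positivity
  have hμsum : μ * 2^n = ∑ x : Fin n → Bool, g x := by
    rw [hμdef, fhat, div_mul_cancel₀]
    · exact Finset.sum_congr rfl fun x _ => by rw [Finset.prod_empty, mul_one]
    · exact ne_of_gt h2n0
  have hμ0 : 0 ≤ μ := by
    have hs : 0 ≤ ∑ x : Fin n → Bool, g x := Finset.sum_nonneg fun x _ => hg0 x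
    nlinarith
  have hμ1 : μ ≤ 1 := by
    have hs : ∑ x : Fin n → Bool, g x ≤ 2^n := by
      calc ∑ x : Fin n → Bool, g x ≤ ∑ _x : Fin n → Bool, (1:ℝ) :=
            Finset.sum_le_sum fun x _ => hg1 x
        _ = 2^n := by
          rw [Finset.sum_const, Finset.card_univ, Fintype.card_fun, Fintype.card_fin,
            Fintype.card_bool, nsmul_eq_mul, mul_one]
          push_cast
          ring
    nlinarith
  rcases eq_or_lt_of_le hμ0 with hμz | hμpos
  · -- μ = 0 : g is identically 0
    have hgz : ∀ x, g x = 0 := by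
      intro x
      by_contra hx
      have hxpos : 0 < g x := lt_of_le_of_ne (hg0 x) (Ne.symm hx)
      have : 0 < ∑ y : Fin n → Bool, g y :=
        Finset.sum_pos' (fun y _ => hg0 y) ⟨x, Finset.mem_univ x, hxpos⟩
      nlinarith
    have hfz : ∀ S : Finset (Fin n), fhat g S = 0 := by
      intro S
      rw [fhat]
      rw [Finset.sum_eq_zero fun x _ => by rw [hgz x, zero_mul]]
      simp
    rw [show (4:ℝ) * μ^2 * _ = 4 * μ^2 * ((2 * Real.exp 1 *
        Real.log (Real.exp 1 / μ ^ ((1 : ℝ) / d))) ^ d) from rfl, ← hμz]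
    rw [Finset.sum_eq_zero fun S _ => by rw [hfz S]; ring]
    simp
  · -- main case μ > 0
    set L : ℝ := -Real.log μ with hLdef
    have hL0 : 0 ≤ L := by
      rw [hLdef, neg_nonneg]
      exact Real.log_nonpos hμ0 hμ1
    set u : ℝ := L / d with hudef
    have hu0 : 0 ≤ u := div_nonneg hL0 (Nat.cast_nonneg d)
    have hd0 : (0:ℝ) < d := by exact_mod_cast hd
    have hlog : Real.log (Real.exp 1 / μ ^ ((1 : ℝ) / d)) = 1 + u := by
      rw [Real.log_div (ne_of_gt (Real.exp_pos 1)) (ne_of_gt (Real.rpow_pos_of_pos hμpos _)),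
        Real.log_exp, Real.log_rpow hμpos, hudef, hLdef]
      field_simp
      ring
    rw [hlog]
    set m : ℕ := ⌈1 + u⌉₊ with hmdef
    have hm1 : 1 ≤ m := by
      rw [hmdef]
      exact Nat.one_le_ceil_iff.mpr (by linarith)
    have hmu : 1 + u ≤ (m:ℝ) := Nat.le_ceil _
    have hm2 : (m:ℝ) < 2 + u := by
      have := Nat.ceil_lt_add_one (by linarith : (0:ℝ) ≤ 1 + u)
      rw [hmdef]
      linarith
    set β : ℝ := ((2*m-1:ℕ):ℝ) with hβdef
    have hβcast : β = 2*(m:ℝ) - 1 := by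
      rw [hβdef, Nat.cast_sub (by omega), Nat.cast_mul]
      norm_num
    have hβ1 : 1 ≤ β := by
      have hc : (1:ℝ) ≤ m := by exact_mod_cast hm1
      rw [hβcast]
      linarith
    have hβ0 : 0 ≤ β := le_trans zero_le_one hβ1
    set filt := Finset.univ.filter (fun S : Finset (Fin n) => S.card = d) with hfilt
    set W : ℝ := ∑ S ∈ filt, (fhat g S) ^ 2 with hWdef
    have hW0 : 0 ≤ W := Finset.sum_nonneg fun S _ => sq_nonneg _
    set F : (Fin n → Bool) → ℝ := fun x => ∑ S ∈ filt, fhat g S * ∏ i ∈ S, sgn (x i) with hF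
    -- step A : 2^n * W = ∑ g x * F x
    have hWF : (2:ℝ)^n * W = ∑ x : Fin n → Bool, g x * F x := by
      calc (2:ℝ)^n * W = ∑ S ∈ filt, fhat g S * (fhat g S * 2^n) := by
            rw [hWdef, Finset.mul_sum]
            exact Finset.sum_congr rfl fun S _ => by ring
        _ = ∑ S ∈ filt, fhat g S * ∑ x : Fin n → Bool, g x * ∏ i ∈ S, sgn (x i) := by
            refine Finset.sum_congr rfl fun S _ => ?_
            rw [fhat, div_mul_cancel₀ _ (ne_of_gt h2n0)]
        _ = ∑ S ∈ filt, ∑ x : Fin n → Bool, fhat g S * (g x * ∏ i ∈ S, sgn (x i)) := by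
            exact Finset.sum_congr rfl fun S _ => by rw [Finset.mul_sum]
        _ = ∑ x : Fin n → Bool, ∑ S ∈ filt, fhat g S * (g x * ∏ i ∈ S, sgn (x i)) :=
            Finset.sum_comm
        _ = ∑ x : Fin n → Bool, g x * F x := by
            refine Finset.sum_congr rfl fun x _ => ?_
            rw [hF, Finset.mul_sum]
            exact Finset.sum_congr rfl fun S _ => by ring
    -- apply hypercontractivity to F
    have hFhyp : ∑ x : Fin n → Bool, F x ^ (2*m) ≤ 2^n * (β^d * W)^m := by
      have happ := hyp n m hm1 Finset.univ (fun S => if S.card = d then fhat g S else 0)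
      have hFx : ∀ x, F x = ∑ S ∈ (Finset.univ : Finset (Fin n)).powerset,
          (if S.card = d then fhat g S else 0) * ∏ i ∈ S, sgn (x i) := by
        intro x
        simp only [Finset.powerset_univ, hF, hfilt, Finset.sum_filter]
        exact Finset.sum_congr rfl fun S _ => by split <;> simp
      have hcoef : ∑ S ∈ (Finset.univ : Finset (Fin n)).powerset,
          β^S.card * (if S.card = d then fhat g S else 0) ^ 2 = β^d * W := by
        rw [Finset.powerset_univ, hWdef, hfilt, Finset.mul_sum, Finset.sum_filter]
        refine Finset.sum_congr rfl fun S _ => ?_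
        split
        · rename_i h
          rw [h]
        · ring
      rw [show (∑ x : Fin n → Bool, F x ^ (2*m))
          = ∑ x : Fin n → Bool, (∑ S ∈ (Finset.univ : Finset (Fin n)).powerset,
            (if S.card = d then fhat g S else 0) * ∏ i ∈ S, sgn (x i)) ^ (2*m) from
          Finset.sum_congr rfl fun x _ => by rw [hFx x], ← hcoef]
      exact happ
    -- Hölder
    have hm0 : (0:ℝ) < m := by exact_mod_cast hm1
    have hpq : Real.HolderConjugate ((2*m:ℝ)/(2*m-1)) (2*m:ℝ) := by
      rw [Real.holderConjugate_iff]
      constructor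
      · rw [lt_div_iff₀ (by linarith : (0:ℝ) < 2*m-1)]
        linarith
      · rw [inv_div]
        field_simp
        ring
    have hold := Real.inner_le_Lp_mul_Lq Finset.univ g F hpq
    have hgp : ∑ x : Fin n → Bool, |g x| ^ ((2*m:ℝ)/(2*m-1)) ≤ μ * 2^n := by
      rw [hμsum]
      apply Finset.sum_le_sum
      intro x _
      rw [abs_of_nonneg (hg0 x)]
      rcases eq_or_lt_of_le (hg0 x) with hz | hz
      · rw [← hz, Real.zero_rpow (ne_of_gt (div_pos (by linarith) (by linarith)))]
      · have h1 : g x ^ ((2*m:ℝ)/(2*m-1)) ≤ g x ^ (1:ℝ) := by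
          apply Real.rpow_le_rpow_of_exponent_ge hz (hg1 x)
          rw [le_div_iff₀ (by linarith : (0:ℝ) < 2*m-1)]
          linarith
        rw [Real.rpow_one] at h1
        exact h1
    have hFq : ∑ x : Fin n → Bool, |F x| ^ ((2*m:ℝ)) ≤ 2^n * (β^d * W)^m := by
      refine le_trans (le_of_eq ?_) hFhyp
      refine Finset.sum_congr rfl fun x _ => ?_
      rw [show ((2*m:ℝ)) = ((2*m : ℕ):ℝ) by push_cast; ring, Real.rpow_natCast,
        pow_abs, abs_of_nonneg (Even.pow_nonneg ⟨m, by ring⟩ (F x))]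
    -- combine Hölder with the two norm bounds
    have hsum_nonneg : (0:ℝ) ≤ ∑ x : Fin n → Bool, |g x| ^ ((2*m:ℝ)/(2*m-1)) :=
      Finset.sum_nonneg fun x _ => Real.rpow_nonneg (abs_nonneg _) _
    have hFsum_nonneg : (0:ℝ) ≤ ∑ x : Fin n → Bool, |F x| ^ ((2*m:ℝ)) :=
      Finset.sum_nonneg fun x _ => Real.rpow_nonneg (abs_nonneg _) _
    have hβdW : (0:ℝ) ≤ β^d * W := mul_nonneg (pow_nonneg hβ0 d) hW0
    have hexp1 : ((2*m-1:ℝ)/(2*m)) + 1/(2*m:ℝ) = 1 := by field_simp; ring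
    have hkey : W ≤ μ ^ ((2*m-1:ℝ)/(2*m)) * (β^d*W) ^ ((1:ℝ)/2) := by
      have t1 : (∑ x : Fin n → Bool, |g x| ^ ((2*m:ℝ)/(2*m-1))) ^ (1/((2*m:ℝ)/(2*m-1)))
          ≤ (μ*2^n) ^ ((2*m-1:ℝ)/(2*m)) := by
        rw [show 1/((2*m:ℝ)/(2*m-1)) = (2*m-1:ℝ)/(2*m) by rw [one_div, inv_div]]
        exact Real.rpow_le_rpow hsum_nonneg hgp (div_nonneg (by linarith) (by linarith))
      have t2 : (∑ x : Fin n → Bool, |F x| ^ ((2*m:ℝ))) ^ (1/(2*m:ℝ))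
          ≤ (2^n * (β^d*W)^m) ^ (1/(2*m:ℝ)) :=
        Real.rpow_le_rpow hFsum_nonneg hFq (by positivity)
      have hchain : (2:ℝ)^n * W ≤ (μ*2^n) ^ ((2*m-1:ℝ)/(2*m)) * (2^n * (β^d*W)^m) ^ (1/(2*m:ℝ)) := by
        rw [hWF]
        refine le_trans hold ?_
        exact mul_le_mul t1 t2 (Real.rpow_nonneg hFsum_nonneg _)
          (Real.rpow_nonneg (mul_nonneg hμ0 (le_of_lt h2n0)) _)
      have hEq : (μ*2^n) ^ ((2*m-1:ℝ)/(2*m)) * (2^n * (β^d*W)^m) ^ (1/(2*m:ℝ))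
          = 2^n * (μ ^ ((2*m-1:ℝ)/(2*m)) * (β^d*W) ^ ((1:ℝ)/2)) := by
        rw [Real.mul_rpow hμ0 (le_of_lt h2n0), Real.mul_rpow (le_of_lt h2n0) (pow_nonneg hβdW m)]
        have c1 : ((2:ℝ)^n) ^ ((2*m-1:ℝ)/(2*m)) * ((2:ℝ)^n) ^ (1/(2*m:ℝ)) = 2^n := by
          rw [← Real.rpow_add h2n0, hexp1, Real.rpow_one]
        have c2 : ((β^d*W)^m) ^ (1/(2*m:ℝ)) = (β^d*W) ^ ((1:ℝ)/2) := by
          rw [← Real.rpow_natCast (β^d*W) m, ← Real.rpow_mul hβdW]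
          congr 1
          have : (m:ℝ) ≠ 0 := by positivity
          field_simp
        calc μ ^ ((2*m-1:ℝ)/(2*m)) * ((2:ℝ)^n) ^ ((2*m-1:ℝ)/(2*m))
              * (((2:ℝ)^n) ^ (1/(2*m:ℝ)) * ((β^d*W)^m) ^ (1/(2*m:ℝ)))
            = (((2:ℝ)^n) ^ ((2*m-1:ℝ)/(2*m)) * ((2:ℝ)^n) ^ (1/(2*m:ℝ)))
              * (μ ^ ((2*m-1:ℝ)/(2*m)) * ((β^d*W)^m) ^ (1/(2*m:ℝ))) := by ring
          _ = 2^n * (μ ^ ((2*m-1:ℝ)/(2*m)) * (β^d*W) ^ ((1:ℝ)/2)) := by rw [c1, c2]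
      rw [hEq] at hchain
      exact le_of_mul_le_mul_left hchain h2n0
    -- final analytic bound
    have hanal : μ ^ (-(1:ℝ)/m) * β^d ≤ (2*Real.exp 1*(1+u))^d := by
      have h1u : (0:ℝ) < 1 + u := by linarith
      have hLu : L = u * d := by rw [hudef]; field_simp
      have hLm : L/(m:ℝ) ≤ L/(1+u) := by
        apply div_le_div_of_nonneg_left hL0 h1u hmu
      have hmuexp : μ ^ (-(1:ℝ)/m) = Real.exp (L/m) := by
        rw [Real.rpow_def_of_pos hμpos]
        congr 1
        rw [hLdef]
        have : (m:ℝ) ≠ 0 := by positivity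
        field_simp
      have hexpb : Real.exp (L/m) ≤ Real.exp (u/(1+u)) ^ d := by
        rw [← Real.exp_nat_mul]
        apply Real.exp_le_exp.mpr
        calc L/(m:ℝ) ≤ L/(1+u) := hLm
          _ = d * (u/(1+u)) := by rw [hLu]; ring
      have hβb : β^d ≤ (3+2*u)^d := by
        apply pow_le_pow_left₀ hβ0
        rw [hβcast]
        linarith
      calc μ ^ (-(1:ℝ)/m) * β^d ≤ (Real.exp (u/(1+u)) ^ d) * ((3+2*u)^d) := by
            apply mul_le_mul (by rw [hmuexp]; exact hexpb) hβb (pow_nonneg hβ0 d)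
              (pow_nonneg (le_of_lt (Real.exp_pos _)) d)
        _ = ((3+2*u) * Real.exp (u/(1+u)))^d := by rw [← mul_pow]; ring_nf
        _ ≤ (2*Real.exp 1*(1+u))^d := by
            apply pow_le_pow_left₀ (mul_nonneg (by linarith) (le_of_lt (Real.exp_pos _)))
            exact analytic_key u hu0
    have hRHSnn : (0:ℝ) ≤ (2*Real.exp 1*(1+u))^d :=
      pow_nonneg (mul_nonneg (by positivity) (by linarith)) d
    rcases eq_or_lt_of_le hW0 with hWz | hWpos
    · rw [← hWz]
      positivity
    · -- divide by sqrt W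
      have ht : (0:ℝ) < W ^ ((1:ℝ)/2) := Real.rpow_pos_of_pos hWpos _
      have hsplitW : (β^d*W)^((1:ℝ)/2) = (β^d)^((1:ℝ)/2) * W^((1:ℝ)/2) :=
        Real.mul_rpow (pow_nonneg hβ0 d) hW0
      have hWt : W = W^((1:ℝ)/2) * W^((1:ℝ)/2) := by
        rw [← Real.rpow_add hWpos]
        norm_num
      have hstep : W ^ ((1:ℝ)/2) ≤ μ ^ ((2*m-1:ℝ)/(2*m)) * (β^d)^((1:ℝ)/2) := by
        apply le_of_mul_le_mul_right _ ht
        calc W ^ ((1:ℝ)/2) * W ^ ((1:ℝ)/2) = W := hWt.symm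
          _ ≤ μ ^ ((2*m-1:ℝ)/(2*m)) * (β^d*W) ^ ((1:ℝ)/2) := hkey
          _ = μ ^ ((2*m-1:ℝ)/(2*m)) * (β^d)^((1:ℝ)/2) * W^((1:ℝ)/2) := by
              rw [hsplitW]; ring
      have hsq : W ≤ (μ ^ ((2*m-1:ℝ)/(2*m)) * (β^d)^((1:ℝ)/2))^2 := by
        rw [hWt]
        calc W ^ ((1:ℝ)/2) * W ^ ((1:ℝ)/2)
            ≤ (μ ^ ((2*m-1:ℝ)/(2*m)) * (β^d)^((1:ℝ)/2))
              * (μ ^ ((2*m-1:ℝ)/(2*m)) * (β^d)^((1:ℝ)/2)) :=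
              mul_le_mul hstep hstep (le_of_lt ht)
                (mul_nonneg (Real.rpow_nonneg hμ0 _) (Real.rpow_nonneg (pow_nonneg hβ0 d) _))
          _ = _ := by ring
      have hsq2 : (μ ^ ((2*m-1:ℝ)/(2*m)) * (β^d)^((1:ℝ)/2))^2
          = μ^2 * (μ ^ (-(1:ℝ)/m) * β^d) := by
        have hm0' : (m:ℝ) ≠ 0 := ne_of_gt hm0
        have hβdpos : (0:ℝ) < β^d := pow_pos (lt_of_lt_of_le zero_lt_one hβ1) d
        have pa : μ ^ ((2*m-1:ℝ)/(2*m)) * μ ^ ((2*m-1:ℝ)/(2*m))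
            = μ^(2:ℕ) * μ ^ (-(1:ℝ)/m) := by
          rw [← Real.rpow_add hμpos, ← Real.rpow_natCast μ 2, ← Real.rpow_add hμpos]
          congr 1
          push_cast
          field_simp
          ring
        have pb : (β^d)^((1:ℝ)/2) * (β^d)^((1:ℝ)/2) = β^d := by
          rw [← Real.rpow_add hβdpos]
          norm_num
        calc (μ ^ ((2*m-1:ℝ)/(2*m)) * (β^d)^((1:ℝ)/2))^2
            = (μ ^ ((2*m-1:ℝ)/(2*m)) * μ ^ ((2*m-1:ℝ)/(2*m)))
              * ((β^d)^((1:ℝ)/2) * (β^d)^((1:ℝ)/2)) := by ring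
          _ = (μ^(2:ℕ) * μ ^ (-(1:ℝ)/m)) * β^d := by rw [pa, pb]
          _ = μ^2 * (μ ^ (-(1:ℝ)/m) * β^d) := by ring
      calc W ≤ (μ ^ ((2*m-1:ℝ)/(2*m)) * (β^d)^((1:ℝ)/2))^2 := hsq
        _ = μ^2 * (μ ^ (-(1:ℝ)/m) * β^d) := hsq2
        _ ≤ μ^2 * (2*Real.exp 1*(1+u))^d :=
            mul_le_mul_of_nonneg_left hanal (sq_nonneg μ)
        _ ≤ 4 * μ^2 * (2*Real.exp 1*(1+u))^d := by nlinarith [sq_nonneg μ, hRHSnn]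
end

section
/- For every positive integer d and every real t₀ ≥ (2e)^{d/2}, the tail integral satisfies ∫_{t₀}^∞ e^{-(d/(2e)) t^{2/d}} dt ≤ 2e · t₀^{1-2/d} · e^{-(d/(2e)) t₀^{2/d}}. -/
open MeasureTheory Real Filter Set Topology

theorem stmt3 (d : ℕ) (hd : 0 < d) (t₀ : ℝ)
    (ht : (2 * Real.exp 1) ^ ((d : ℝ) / 2) ≤ t₀) :
    ∫ t in Set.Ioi t₀, Real.exp (-((d : ℝ) / (2 * Real.exp 1)) * t ^ (2 / (d : ℝ)))
      ≤ 2 * Real.exp 1 * t₀ ^ (1 - 2 / (d : ℝ)) *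
        Real.exp (-((d : ℝ) / (2 * Real.exp 1)) * t₀ ^ (2 / (d : ℝ))) := by
  have he0 : (0:ℝ) < 2 * Real.exp 1 := by positivity
  have hdR : (0:ℝ) < d := by exact_mod_cast hd
  set e : ℝ := Real.exp 1 with he
  set p : ℝ := 2 / d with hp
  set c : ℝ := d / (2 * e) with hc
  have hp0 : 0 < p := by positivity
  have hc0 : 0 < c := by positivity
  have ht0 : (0:ℝ) < t₀ := lt_of_lt_of_le (Real.rpow_pos_of_pos he0 _) ht
  have hcp : c * p = 1 / e := by
    rw [hc, hp]; field_simp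
  set g : ℝ → ℝ := fun t => -(2 * e * t ^ (1 - p) * Real.exp (-c * t ^ p)) with hg
  set g' : ℝ → ℝ := fun t => Real.exp (-c * t ^ p) * (2 - 2 * e * (1 - p) * t ^ (-p)) with hg'
  -- derivative
  have hderiv : ∀ x ∈ Set.Ici t₀, HasDerivAt g (g' x) x := by
    intro x hx
    have hx0 : 0 < x := lt_of_lt_of_le ht0 hx
    have h1 : HasDerivAt (fun t : ℝ => t ^ (1 - p)) ((1 - p) * x ^ (1 - p - 1)) x :=
      Real.hasDerivAt_rpow_const (Or.inl hx0.ne')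
    have h2 : HasDerivAt (fun t : ℝ => -c * t ^ p) (-c * (p * x ^ (p - 1))) x :=
      (Real.hasDerivAt_rpow_const (p := p) (Or.inl hx0.ne')).const_mul (-c)
    have h3 : HasDerivAt (fun t : ℝ => Real.exp (-c * t ^ p))
        (Real.exp (-c * x ^ p) * (-c * (p * x ^ (p - 1)))) x := (Real.hasDerivAt_exp _).comp x h2
    have h4 := ((h1.const_mul (2 * e)).mul h3).neg
    have e1 : x ^ (1 - p - 1) = x ^ (-p) := by norm_num
    have e2 : x ^ (1 - p) * x ^ (p - 1) = 1 := by
      rw [← Real.rpow_add hx0]; simp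
    have h6 : 2 * e * (c * p) = 2 := by
      rw [hcp]; field_simp; exact div_self (Real.exp_pos 1).ne'
    rw [e1] at h4
    have h4' : HasDerivAt g _ x := h4
    convert h4' using 1
    show Real.exp (-c * x ^ p) * (2 - 2 * e * (1 - p) * x ^ (-p)) = _
    linear_combination (-(2 * e * (c * p)) * Real.exp (-c * x ^ p)) * e2
      - Real.exp (-c * x ^ p) * h6
  -- key bound: 2e(1-p) x^{-p} ≤ 1 for x ≥ t₀
  have hkey : ∀ x : ℝ, t₀ ≤ x → 2 * e * (1 - p) * x ^ (-p) ≤ 1 := by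
    intro x hx
    have hx0 : 0 < x := lt_of_lt_of_le ht0 hx
    have hxp : 2 * e ≤ x ^ p := by
      have h1 : (2 * e) ^ ((d:ℝ)/2) ≤ x := le_trans ht hx
      have := Real.rpow_le_rpow (by positivity) h1 hp0.le
      rwa [← Real.rpow_mul he0.le, show (d:ℝ)/2 * p = 1 by
        rw [hp]; field_simp, Real.rpow_one] at this
    have hxp' : x ^ (-p) ≤ (2*e)⁻¹ := by
      rw [Real.rpow_neg hx0.le]
      exact inv_anti₀ he0 hxp
    calc 2 * e * (1 - p) * x ^ (-p) ≤ 2 * e * 1 * x ^ (-p) := by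
          apply mul_le_mul_of_nonneg_right _ (Real.rpow_nonneg hx0.le _)
          have : 1 - p ≤ 1 := by linarith
          nlinarith [Real.exp_pos 1]
      _ ≤ 2 * e * (2*e)⁻¹ := by rw [mul_one]; exact mul_le_mul_of_nonneg_left hxp' he0.le
      _ = 1 := by field_simp; exact div_self (Real.exp_pos 1).ne'
  have hg'pos : ∀ x ∈ Set.Ioi t₀, 0 ≤ g' x := by
    intro x hx
    have := hkey x (le_of_lt hx)
    have : (1:ℝ) ≤ 2 - 2 * e * (1 - p) * x ^ (-p) := by linarith
    positivity
  -- tendsto 0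
  have htend : Tendsto g atTop (𝓝 0) := by
    have h1 : Tendsto (fun u : ℝ => u ^ ((1 - p)/p) * Real.exp (-c * u)) atTop (𝓝 0) :=
      tendsto_rpow_mul_exp_neg_mul_atTop_nhds_zero _ _ hc0
    have h2 : Tendsto (fun t : ℝ => t ^ p) atTop atTop := tendsto_rpow_atTop hp0
    have h3 := h1.comp h2
    have h4 : Tendsto (fun t : ℝ => t ^ (1 - p) * Real.exp (-c * t ^ p)) atTop (𝓝 0) := by
      apply h3.congr'
      filter_upwards [eventually_gt_atTop (0:ℝ)] with x hx0
      simp only [Function.comp]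
      rw [← Real.rpow_mul hx0.le, mul_div_cancel₀ _ hp0.ne']
    have := (h4.const_mul (2 * e)).neg
    simpa [hg, mul_assoc] using this
  have hint : ∫ x in Set.Ioi t₀, g' x = 0 - g t₀ :=
    integral_Ioi_of_hasDerivAt_of_nonneg' hderiv hg'pos htend
  have hintg' : IntegrableOn g' (Set.Ioi t₀) :=
    integrableOn_Ioi_deriv_of_nonneg' hderiv hg'pos htend
  -- pointwise bound
  have hbound : ∀ x ∈ Set.Ioi t₀,
      Real.exp (-((d : ℝ) / (2 * Real.exp 1)) * x ^ (2 / (d : ℝ))) ≤ g' x := by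
    intro x hx
    have hk := hkey x (le_of_lt hx)
    have h1 : (1:ℝ) ≤ 2 - 2 * e * (1 - p) * x ^ (-p) := by linarith
    calc Real.exp (-((d : ℝ) / (2 * Real.exp 1)) * x ^ (2 / (d : ℝ)))
        = Real.exp (-c * x ^ p) * 1 := by rw [mul_one]
      _ ≤ g' x := by
          rw [hg']
          exact mul_le_mul_of_nonneg_left h1 (Real.exp_pos _).le
  -- integrability of LHS
  have hintf : IntegrableOn
      (fun t => Real.exp (-((d : ℝ) / (2 * Real.exp 1)) * t ^ (2 / (d : ℝ)))) (Set.Ioi t₀) := by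
    have hcont : Continuous fun t : ℝ =>
        Real.exp (-((d:ℝ)/(2*Real.exp 1)) * t ^ (2/(d:ℝ))) := by
      apply Real.continuous_exp.comp
      apply Continuous.mul continuous_const
      exact continuous_iff_continuousAt.2 fun x =>
        Real.continuousAt_rpow_const x _ (Or.inr (by positivity))
    apply hintg'.mono' hcont.aestronglyMeasurable
    rw [ae_restrict_iff' measurableSet_Ioi]
    filter_upwards with x hx
    rw [Real.norm_eq_abs, abs_of_pos (Real.exp_pos _)]
    exact hbound x hx
  have hmono := setIntegral_mono_on hintf hintg' measurableSet_Ioi hbound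
  rw [hint] at hmono
  calc _ ≤ 0 - g t₀ := hmono
    _ = 2 * e * t₀ ^ (1 - p) * Real.exp (-c * t₀ ^ p) := by rw [hg]; ring
    _ = _ := rfl
end

section
/- Let φ, ψ : (0,1] → ℝ be differentiable with φ, ψ ≥ 0, φ', ψ' > 0, and φ'', ψ'' ≤ 0. Define Ψ(x,y) = φ'(x)ψ(y) + ψ'(x)φ(y) − φ(x)ψ'(y) − ψ(x)φ'(y). Then for all x, y ∈ (0,1] with y ≤ x, we have Ψ(x,y) ≤ 0. -/
/-- Let `φ, ψ : (0,1] → ℝ` be nonnegative, strictly increasing and concave (witnessed by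
first derivatives `φ', ψ' > 0` and second derivatives `φ'', ψ'' ≤ 0`).  Then
`Ψ(x,y) = φ'(x)ψ(y) + ψ'(x)φ(y) − φ(x)ψ'(y) − ψ(x)φ'(y) ≤ 0` whenever `y ≤ x` in `(0,1]`. -/
theorem stmt14 (φ ψ φ' ψ' φ'' ψ'' : ℝ → ℝ)
    (hφ0 : ∀ x ∈ Set.Ioc (0 : ℝ) 1, 0 ≤ φ x)
    (hψ0 : ∀ x ∈ Set.Ioc (0 : ℝ) 1, 0 ≤ ψ x)
    (hφd : ∀ x ∈ Set.Ioc (0 : ℝ) 1, HasDerivAt φ (φ' x) x)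
    (hψd : ∀ x ∈ Set.Ioc (0 : ℝ) 1, HasDerivAt ψ (ψ' x) x)
    (hφ'pos : ∀ x ∈ Set.Ioc (0 : ℝ) 1, 0 < φ' x)
    (hψ'pos : ∀ x ∈ Set.Ioc (0 : ℝ) 1, 0 < ψ' x)
    (hφdd : ∀ x ∈ Set.Ioc (0 : ℝ) 1, HasDerivAt φ' (φ'' x) x)
    (hψdd : ∀ x ∈ Set.Ioc (0 : ℝ) 1, HasDerivAt ψ' (ψ'' x) x)
    (hφ'' : ∀ x ∈ Set.Ioc (0 : ℝ) 1, φ'' x ≤ 0)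
    (hψ'' : ∀ x ∈ Set.Ioc (0 : ℝ) 1, ψ'' x ≤ 0)
    (x y : ℝ) (hx : x ∈ Set.Ioc (0 : ℝ) 1) (hy : y ∈ Set.Ioc (0 : ℝ) 1) (hyx : y ≤ x) :
    φ' x * ψ y + ψ' x * φ y - φ x * ψ' y - ψ x * φ' y ≤ 0 := by
  set F : ℝ → ℝ := fun t => φ' x * ψ t + ψ' x * φ t - φ x * ψ' t - ψ x * φ' t with hF
  have hsub : Set.Icc y x ⊆ Set.Ioc (0 : ℝ) 1 := fun t ht =>
    ⟨lt_of_lt_of_le hy.1 ht.1, le_trans ht.2 hx.2⟩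
  have hFd : ∀ t ∈ Set.Icc y x,
      HasDerivAt F (φ' x * ψ' t + ψ' x * φ' t - φ x * ψ'' t - ψ x * φ'' t) t := by
    intro t ht
    have ht' := hsub ht
    exact (((((hψd t ht').const_mul _).add ((hφd t ht').const_mul _)).sub
      ((hψdd t ht').const_mul _)).sub ((hφdd t ht').const_mul _))
  have hmono : MonotoneOn F (Set.Icc y x) := by
    apply monotoneOn_of_deriv_nonneg (convex_Icc y x)
    · exact fun t ht => (hFd t ht).continuousAt.continuousWithinAt
    · intro t ht
      rw [interior_Icc] at ht
      exact ((hFd t (Set.Ioo_subset_Icc_self ht)).differentiableAt).differentiableWithinAt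
    · intro t ht
      rw [interior_Icc] at ht
      have ht' := Set.Ioo_subset_Icc_self ht
      rw [(hFd t ht').deriv]
      have h1 := hφ'pos x hx
      have h2 := hψ'pos x hx
      have h3 := hφ'pos t (hsub ht')
      have h4 := hψ'pos t (hsub ht')
      have h5 := hφ0 x hx
      have h6 := hψ0 x hx
      have h7 := hφ'' t (hsub ht')
      have h8 := hψ'' t (hsub ht')
      nlinarith
  have hFx : F x = 0 := by simp [hF]; ring
  have := hmono (Set.left_mem_Icc.2 hyx) (Set.right_mem_Icc.2 hyx) hyx
  rw [hFx] at this
  exact this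
end

section
/- For every integer d ≥ 1, integer ℓ with 1 ≤ ℓ ≤ d, reals α ∈ (0,1] and positive integers z_1,...,z_ℓ with ∑_{i=1}^ℓ z_i = d, we have ∏_{i=1}^ℓ (ln(e/α^{1/z_i}))^{z_i/2} ≤ (ln(e/α^{ℓ/d}))^{d/2}. -/
open Finset

/-- Weighted AM–GM consequence: for positive integers `z₁,…,z_ℓ` with `∑ zᵢ = d` and
`α ∈ (0,1]`, `∏ᵢ (ln(e/α^{1/zᵢ}))^{zᵢ/2} ≤ (ln(e/α^{ℓ/d}))^{d/2}`. -/
theorem stmt16 (d ℓ : ℕ) (hd : 1 ≤ d) (hℓ1 : 1 ≤ ℓ) (hℓd : ℓ ≤ d)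
    (α : ℝ) (hα : α ∈ Set.Ioc (0 : ℝ) 1)
    (z : Fin ℓ → ℕ) (hz : ∀ i, 1 ≤ z i) (hsum : ∑ i, z i = d) :
    ∏ i, (Real.log (Real.exp 1 / α ^ ((1 : ℝ) / (z i)))) ^ ((z i : ℝ) / 2)
      ≤ (Real.log (Real.exp 1 / α ^ ((ℓ : ℝ) / (d : ℝ)))) ^ ((d : ℝ) / 2) := by
  obtain ⟨hα0, hα1⟩ := hα
  have hlogα : Real.log α ≤ 0 := Real.log_nonpos hα0.le hα1
  have hd0 : (0:ℝ) < d := by exact_mod_cast hd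
  set p : Fin ℓ → ℝ := fun i => 1 - Real.log α / z i with hp
  have hzpos : ∀ i, (0:ℝ) < z i := fun i => by exact_mod_cast hz i
  have hplog : ∀ i, Real.log (Real.exp 1 / α ^ ((1 : ℝ) / (z i))) = p i := by
    intro i
    rw [Real.log_div (Real.exp_ne_zero 1) (by positivity), Real.log_exp,
      Real.log_rpow hα0]
    simp [hp]
    ring
  have hp1 : ∀ i, (1:ℝ) ≤ p i := by
    intro i
    have : Real.log α / z i ≤ 0 := div_nonpos_of_nonpos_of_nonneg hlogα (hzpos i).le
    simp [hp]; linarith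
  have hrhslog : Real.log (Real.exp 1 / α ^ ((ℓ : ℝ) / (d : ℝ)))
      = 1 - (ℓ : ℝ) / d * Real.log α := by
    rw [Real.log_div (Real.exp_ne_zero 1) (by positivity), Real.log_exp,
      Real.log_rpow hα0]
  have hw : ∀ i ∈ Finset.univ, (0:ℝ) ≤ (z i : ℝ) / d := fun i _ => by positivity
  have hwsum : ∑ i, (z i : ℝ) / d = 1 := by
    rw [← Finset.sum_div]
    rw [div_eq_one_iff_eq hd0.ne']
    exact_mod_cast hsum
  have hAM : ∏ i, p i ^ ((z i : ℝ) / d) ≤ ∑ i, ((z i : ℝ) / d) * p i :=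
    Real.geom_mean_le_arith_mean_weighted _ _ _ hw hwsum
      (fun i _ => le_trans zero_le_one (hp1 i))
  have hsumval : ∑ i, ((z i : ℝ) / d) * p i = 1 - (ℓ : ℝ) / d * Real.log α := by
    have : ∀ i, ((z i : ℝ) / d) * p i = (z i : ℝ) / d - Real.log α / d := by
      intro i
      have hne := (hzpos i).ne'
      simp only [hp]
      field_simp
    rw [Finset.sum_congr rfl (fun i _ => this i), Finset.sum_sub_distrib,
      ← Finset.sum_div, Finset.sum_const]
    have h1 : (∑ i, (z i:ℝ)) = d := by exact_mod_cast hsum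
    rw [h1]
    simp [Finset.card_univ, nsmul_eq_mul]
    field_simp
  calc ∏ i, (Real.log (Real.exp 1 / α ^ ((1 : ℝ) / (z i)))) ^ ((z i : ℝ) / 2)
      = (∏ i, p i ^ ((z i : ℝ) / d)) ^ ((d:ℝ)/2) := by
        rw [← Real.finset_prod_rpow _ _ (fun i _ => Real.rpow_nonneg
          (le_trans zero_le_one (hp1 i)) _)]
        refine Finset.prod_congr rfl fun i _ => ?_
        rw [hplog i, ← Real.rpow_mul (le_trans zero_le_one (hp1 i))]
        congr 1
        field_simp
    _ ≤ (1 - (ℓ : ℝ) / d * Real.log α) ^ ((d:ℝ)/2) := by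
        refine Real.rpow_le_rpow ?_ (by rw [← hsumval]; exact hAM) (by positivity)
        exact Finset.prod_nonneg fun i _ => Real.rpow_nonneg
          (le_trans zero_le_one (hp1 i)) _
    _ = _ := by rw [hrhslog]
end
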